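/- Suppose X is a metric space, r ≥ 4, C ≥ 1, and (T,s) is an r-separated tree in X with root z such that val_r(T,s) ≥ 4C·r^{s(z)+1}. Then there exists a C-regular r-separated tree (T',s') in X with (1/2)·val_r(T,s) ≤ val_r(T',s') ≤ val_r(T,s). -/

import Mathlib

/-- `w` lies in the subtree rooted at `u` (w.r.t. the parent function). -/
def IsDescendant {ι : Type*} (parent : ι → ι) (u w : ι) : Prop :=
  ∃ k : ℕ, parent^[k] w = u

/-- An `r`-separated tree in a metric space `X`: a finite rooted tree with vertices placed
in `X` and integer labels `s` such that (1) labels drop by at least 2 along edges;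
(2) the subtrees of distinct children of `x` are `(1/2)r^{s(x)−1}`-separated from each
other and from `x`; (3) the subtree of `x` has diameter at most `4r^{s(x)}`. -/
structure SeparatedTree (X : Type*) [MetricSpace X] (r : ℝ) where
  ι : Type
  fintypeι : Fintype ι
  decEqι : DecidableEq ι
  pos : ι → X
  root : ι
  parent : ι → ι
  depth : ι → ℕ
  s : ι → ℤ
  depth_root : depth root = 0
  parent_depth : ∀ v, v ≠ root → depth (parent v) + 1 = depth v
  root_of_depth_zero : ∀ v, depth v = 0 → v = root
  label_decrease : ∀ v, v ≠ root → s v ≤ s (parent v) - 2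
  sep_parent : ∀ x u w, u ≠ root → parent u = x → IsDescendant parent u w →
    (1 / 2) * r ^ (s x - 1) ≤ dist (pos x) (pos w)
  sep_siblings : ∀ x u u' w w', u ≠ root → u' ≠ root → parent u = x → parent u' = x →
    u ≠ u' → IsDescendant parent u w → IsDescendant parent u' w' →
    (1 / 2) * r ^ (s x - 1) ≤ dist (pos w) (pos w')
  diam_subtree : ∀ x w w', IsDescendant parent x w → IsDescendant parent x w' →
    dist (pos w) (pos w') ≤ 4 * r ^ (s x)

attribute [instance] SeparatedTree.fintypeι SeparatedTree.decEqι

variable {X : Type*} [MetricSpace X] {r : ℝ}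

/-- The set of children of a vertex. -/
def SeparatedTree.children (T : SeparatedTree X r) (v : T.ι) : Finset T.ι :=
  Finset.univ.filter fun u => T.parent u = v ∧ u ≠ T.root

/-- `Δ(v)` = number of children of `v`, plus one. -/
def SeparatedTree.Δ (T : SeparatedTree X r) (v : T.ι) : ℕ := (T.children v).card + 1

/-- A leaf is a vertex with no children. -/
def SeparatedTree.IsLeaf (T : SeparatedTree X r) (v : T.ι) : Prop := T.children v = ∅

/-- The vertex at depth `k` on the root-to-`ℓ` path. -/
def SeparatedTree.pathVertex (T : SeparatedTree X r) (ℓ : T.ι) (k : ℕ) : T.ι :=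
  T.parent^[T.depth ℓ - k] ℓ

/-- `val_r(T,s)` = inf over leaves `ℓ` of `Σ_{v on root-to-ℓ path} r^{s(v)} √(log Δ(v))`. -/
noncomputable def SeparatedTree.val (T : SeparatedTree X r) : ℝ :=
  sInf {t : ℝ | ∃ ℓ : T.ι, T.IsLeaf ℓ ∧
    t = ∑ k ∈ Finset.range (T.depth ℓ + 1),
      r ^ (T.s (T.pathVertex ℓ k)) * Real.sqrt (Real.log (T.Δ (T.pathVertex ℓ k)))}

/-- `C`-regularity: every non-leaf `v` satisfies `Δ(v) ≥ exp(C²r²·4^{s(root)−s(v)})`. -/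
def SeparatedTree.Regular (T : SeparatedTree X r) (C : ℝ) : Prop :=
  ∀ v : T.ι, ¬ T.IsLeaf v →
    Real.exp (C ^ 2 * r ^ 2 * (4 : ℝ) ^ (T.s T.root - T.s v)) ≤ (T.Δ v : ℝ)

namespace SeparatedTree

variable {X : Type*} [MetricSpace X] {r : ℝ} (S : SeparatedTree X r)

lemma mem_children_iff {u v : S.ι} : u ∈ S.children v ↔ S.parent u = v ∧ u ≠ S.root := by
  simp [children]

lemma depth_child {u v : S.ι} (h : u ∈ S.children v) : S.depth u = S.depth v + 1 := by
  rw [mem_children_iff] at h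
  have := S.parent_depth u h.2
  rw [h.1] at this
  omega

lemma ne_root_of_depth_pos {v : S.ι} (h : 0 < S.depth v) : v ≠ S.root := by
  intro hv; rw [hv, S.depth_root] at h; omega

lemma depth_iterate {k : ℕ} {v : S.ι} (h : k ≤ S.depth v) :
    S.depth (S.parent^[k] v) = S.depth v - k := by
  induction k generalizing v with
  | zero => simp
  | succ n ih =>
    rw [Function.iterate_succ_apply]
    have hv : v ≠ S.root := S.ne_root_of_depth_pos (by omega)
    have hd := S.parent_depth v hv
    rw [ih (by omega)]
    omega

lemma iterate_depth_root (v : S.ι) : S.parent^[S.depth v] v = S.root := by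
  generalize hn : S.depth v = n
  induction n generalizing v with
  | zero => simpa using S.root_of_depth_zero v hn
  | succ n ih =>
    rw [Function.iterate_succ_apply]
    exact ih _ (by have := S.parent_depth v (S.ne_root_of_depth_pos (by omega)); omega)

lemma s_iterate {k : ℕ} {v : S.ι} (h : k ≤ S.depth v) :
    S.s v + 2 * k ≤ S.s (S.parent^[k] v) := by
  induction k with
  | zero => simp
  | succ n ih =>
    rw [Function.iterate_succ_apply']
    have hne : S.parent^[n] v ≠ S.root :=
      S.ne_root_of_depth_pos (by rw [S.depth_iterate (by omega : n ≤ S.depth v)]; omega)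
    have := S.label_decrease _ hne
    have := ih (by omega)
    push_cast
    omega

lemma s_le_root (v : S.ι) : S.s v ≤ S.s S.root := by
  have := S.s_iterate (le_refl (S.depth v))
  rw [S.iterate_depth_root] at this
  omega

lemma exists_leaf : ∃ ℓ : S.ι, S.IsLeaf ℓ := by
  classical
  obtain ⟨ℓ, -, hmax⟩ := Finset.exists_max_image (Finset.univ : Finset S.ι) S.depth
    ⟨S.root, Finset.mem_univ _⟩
  refine ⟨ℓ, ?_⟩
  by_contra h
  obtain ⟨u, hu⟩ := Finset.nonempty_iff_ne_empty.mpr h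
  have := S.depth_child hu
  have := hmax u (Finset.mem_univ u)
  omega

lemma isLeaf_iff_delta_eq_one {v : S.ι} : S.IsLeaf v ↔ S.Δ v = 1 := by
  unfold IsLeaf Δ
  constructor
  · intro h; rw [h]; simp
  · intro h
    have : (S.children v).card = 0 := by omega
    exact Finset.card_eq_zero.mp this

lemma pathVertex_self (ℓ : S.ι) : S.pathVertex ℓ (S.depth ℓ) = ℓ := by
  unfold pathVertex; simp

lemma depth_pathVertex {ℓ : S.ι} {k : ℕ} (h : k ≤ S.depth ℓ) :
    S.depth (S.pathVertex ℓ k) = k := by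
  unfold pathVertex
  rw [S.depth_iterate (by omega)]
  omega

lemma parent_pathVertex {ℓ : S.ι} {k : ℕ} (h : k + 1 ≤ S.depth ℓ) :
    S.parent (S.pathVertex ℓ (k + 1)) = S.pathVertex ℓ k := by
  unfold pathVertex
  have hk : S.depth ℓ - k = (S.depth ℓ - (k+1)) + 1 := by omega
  rw [hk, Function.iterate_succ_apply']

lemma pathVertex_succ_mem_children {ℓ : S.ι} {k : ℕ} (h : k + 1 ≤ S.depth ℓ) :
    S.pathVertex ℓ (k + 1) ∈ S.children (S.pathVertex ℓ k) := by
  rw [mem_children_iff]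
  exact ⟨S.parent_pathVertex h, S.ne_root_of_depth_pos (by rw [S.depth_pathVertex h]; omega)⟩

lemma not_isLeaf_pathVertex {ℓ : S.ι} {k : ℕ} (h : k + 1 ≤ S.depth ℓ) :
    ¬ S.IsLeaf (S.pathVertex ℓ k) := by
  intro hleaf
  have := S.pathVertex_succ_mem_children h
  rw [hleaf] at this
  simp at this

lemma s_pathVertex_le {ℓ : S.ι} {k : ℕ} (h : k ≤ S.depth ℓ) :
    S.s (S.pathVertex ℓ k) + 2 * k ≤ S.s S.root := by
  have h1 := S.s_iterate (k := k) (v := S.pathVertex ℓ k) (by rw [S.depth_pathVertex h])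
  unfold pathVertex at h1 ⊢
  rw [← Function.iterate_add_apply] at h1
  have hk : k + (S.depth ℓ - k) = S.depth ℓ := by omega
  rw [hk, S.iterate_depth_root] at h1
  exact h1

/-- the summand along a root-to-leaf path -/
noncomputable def pterm (ℓ : S.ι) (k : ℕ) : ℝ :=
  r ^ (S.s (S.pathVertex ℓ k)) * Real.sqrt (Real.log (S.Δ (S.pathVertex ℓ k)))

/-- the total sum along a root-to-leaf path -/
noncomputable def leafSum (ℓ : S.ι) : ℝ :=
  ∑ k ∈ Finset.range (S.depth ℓ + 1), S.pterm ℓ k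

lemma pterm_nonneg (hr : 0 < r) (ℓ : S.ι) (k : ℕ) : 0 ≤ S.pterm ℓ k := by
  unfold pterm
  positivity

open Classical in
lemma val_set_eq :
    {t : ℝ | ∃ ℓ : S.ι, S.IsLeaf ℓ ∧
      t = ∑ k ∈ Finset.range (S.depth ℓ + 1),
        r ^ (S.s (S.pathVertex ℓ k)) * Real.sqrt (Real.log (S.Δ (S.pathVertex ℓ k)))} =
    ↑((Finset.univ.filter (fun ℓ => S.IsLeaf ℓ)).image S.leafSum) := by
  ext t
  simp only [Set.mem_setOf_eq, Finset.coe_image, Set.mem_image, Finset.mem_coe,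
    Finset.mem_filter, Finset.mem_univ, true_and]
  constructor
  · rintro ⟨ℓ, hℓ, rfl⟩; exact ⟨ℓ, hℓ, rfl⟩
  · rintro ⟨ℓ, hℓ, rfl⟩; exact ⟨ℓ, hℓ, rfl⟩

open Classical in
lemma val_eq_min' :
    S.val = ((Finset.univ.filter (fun ℓ => S.IsLeaf ℓ)).image S.leafSum).min'
      (by obtain ⟨ℓ, hℓ⟩ := S.exists_leaf
          exact ⟨S.leafSum ℓ, Finset.mem_image_of_mem _ (by simp [hℓ])⟩) := by
  rw [val, S.val_set_eq]
  exact Finset.Nonempty.csInf_eq_min' _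

lemma val_le_leafSum {ℓ : S.ι} (h : S.IsLeaf ℓ) : S.val ≤ S.leafSum ℓ := by
  classical
  rw [S.val_eq_min']
  exact Finset.min'_le _ _ (Finset.mem_image_of_mem _ (by simp [h]))

lemma le_val (c : ℝ) (h : ∀ ℓ : S.ι, S.IsLeaf ℓ → c ≤ S.leafSum ℓ) : c ≤ S.val := by
  classical
  rw [S.val_eq_min']
  apply Finset.le_min'
  intro y hy
  simp only [Finset.mem_image, Finset.mem_filter, Finset.mem_univ, true_and] at hy
  obtain ⟨ℓ, hℓ, rfl⟩ := hy
  exact h ℓ hℓ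

end SeparatedTree
namespace RegTree

open SeparatedTree

variable {X : Type*} [MetricSpace X] {r : ℝ} (T : SeparatedTree X r) (C : ℝ)

/-- A vertex is *big* if it has many children. -/
def Big (v : T.ι) : Prop :=
  Real.exp (C ^ 2 * r ^ 2 * (4 : ℝ) ^ (T.s T.root - T.s v)) ≤ (T.Δ v : ℝ)

lemma not_isLeaf_of_big (hr : 4 ≤ r) (hC : 1 ≤ C) {v : T.ι} (h : Big T C v) :
    ¬ T.IsLeaf v := by
  intro hl
  rw [T.isLeaf_iff_delta_eq_one] at hl
  unfold Big at h
  rw [hl] at h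
  have h4 : (0:ℝ) < (4:ℝ) ^ (T.s T.root - T.s v) := by positivity
  have hC0 : (0:ℝ) < C := by linarith
  have hr0 : (0:ℝ) < r := by linarith
  have hCr : (0:ℝ) < C ^ 2 * r ^ 2 := by positivity
  have hx : 0 < C ^ 2 * r ^ 2 * (4 : ℝ) ^ (T.s T.root - T.s v) := mul_pos hCr h4
  simp only [Nat.cast_one] at h
  nlinarith [Real.add_one_le_exp (C ^ 2 * r ^ 2 * (4 : ℝ) ^ (T.s T.root - T.s v))]

lemma children_nonempty_of_big (hr : 4 ≤ r) (hC : 1 ≤ C) {v : T.ι} (h : Big T C v) :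
    (T.children v).Nonempty := by
  rw [Finset.nonempty_iff_ne_empty]
  exact not_isLeaf_of_big T C hr hC h

/-- iterating a child-choosing step eventually reaches a leaf -/
lemma reach_leaf (f : T.ι → T.ι) (hf : ∀ v, ¬ T.IsLeaf v → f v ∈ T.children v) (v : T.ι) :
    ∃ j : ℕ, T.IsLeaf (f^[j] v) := by
  classical
  obtain ⟨M, -, hM⟩ := Finset.exists_max_image (Finset.univ : Finset T.ι) T.depth
    ⟨T.root, Finset.mem_univ _⟩
  have key : ∀ j : ℕ, (∃ i ≤ j, T.IsLeaf (f^[i] v)) ∨ T.depth (f^[j] v) = T.depth v + j := by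
    intro j
    induction j with
    | zero => right; simp
    | succ n ih =>
      rcases ih with ⟨i, hi, hl⟩ | hd
      · exact Or.inl ⟨i, by omega, hl⟩
      · by_cases hl : T.IsLeaf (f^[n] v)
        · exact Or.inl ⟨n, by omega, hl⟩
        · right
          rw [Function.iterate_succ_apply']
          have := T.depth_child (hf _ hl)
          omega
  rcases key (T.depth M + 1) with ⟨i, -, hl⟩ | hd
  · exact ⟨i, hl⟩
  · have := hM (f^[T.depth M + 1] v) (Finset.mem_univ _)
    omega

/-- `v` is an ancestor of `w` (within the genuine tree). -/
def Anc (v w : T.ι) : Prop := ∃ k ≤ T.depth w, T.parent^[k] w = v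

lemma anc_refl (v : T.ι) : Anc T v v := ⟨0, by simp, rfl⟩

lemma anc_root (v : T.ι) : Anc T T.root v := ⟨T.depth v, le_refl _, T.iterate_depth_root v⟩

lemma anc_trans {u v w : T.ι} (h1 : Anc T u v) (h2 : Anc T v w) : Anc T u w := by
  obtain ⟨k1, hk1, rfl⟩ := h1
  obtain ⟨k2, hk2, rfl⟩ := h2
  refine ⟨k1 + k2, ?_, ?_⟩
  · have := T.depth_iterate hk2; omega
  · rw [Function.iterate_add_apply]

lemma anc_of_child (T : SeparatedTree X r) {u v : T.ι} (h : u ∈ T.children v) : Anc T v u := by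
  rw [T.mem_children_iff] at h
  refine ⟨1, ?_, by simpa using h.1⟩
  have := T.parent_depth u h.2
  omega

lemma anc_leaf_eq {v w : T.ι} (hv : T.IsLeaf v) (h : Anc T v w) : w = v := by
  obtain ⟨k, hk, hvk⟩ := h
  rcases Nat.eq_zero_or_pos k with rfl | hpos
  · simpa using hvk
  · exfalso
    have hc : T.parent^[k-1] w ∈ T.children v := by
      rw [T.mem_children_iff]
      constructor
      · have hk1 : k = (k - 1) + 1 := by omega
        rw [hk1, Function.iterate_succ_apply'] at hvk
        exact hvk
      · apply T.ne_root_of_depth_pos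
        rw [T.depth_iterate (by omega)]
        have := T.depth_iterate hk
        rw [hvk] at this
        omega
    rw [hv] at hc
    simp at hc
  
lemma exists_leaf_anc (v : T.ι) : ∃ ℓ, T.IsLeaf ℓ ∧ Anc T v ℓ := by
  classical
  set f : T.ι → T.ι := fun v => if h : (T.children v).Nonempty then h.choose else v with hf
  have hstep : ∀ v, ¬ T.IsLeaf v → f v ∈ T.children v := by
    intro v hv
    have h : (T.children v).Nonempty := Finset.nonempty_iff_ne_empty.mpr hv
    simp only [hf, dif_pos h]
    exact h.choose_spec
  obtain ⟨j, hj⟩ := reach_leaf T f hstep v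
  classical
  induction j generalizing v with
  | zero => exact ⟨v, by simpa using hj, anc_refl T v⟩
  | succ n ih =>
    by_cases hv : T.IsLeaf v
    · exact ⟨v, hv, anc_refl T v⟩
    · rw [Function.iterate_succ_apply] at hj
      obtain ⟨ℓ, hℓ, hanc⟩ := ih (f v) hj
      exact ⟨ℓ, hℓ, anc_trans T (anc_of_child T (hstep v hv)) hanc⟩

end RegTree
namespace RegTree

open SeparatedTree

variable {X : Type*} [MetricSpace X] {r : ℝ} (T : SeparatedTree X r) (C : ℝ)

open Classical in
/-- minimal full-path leaf-sum over leaves below `v` -/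
noncomputable def Fval (v : T.ι) : ℝ :=
  ((Finset.univ.filter (fun ℓ => T.IsLeaf ℓ ∧ Anc T v ℓ)).image T.leafSum).min'
    (by obtain ⟨ℓ, h1, h2⟩ := exists_leaf_anc T v
        exact ⟨T.leafSum ℓ, Finset.mem_image_of_mem _ (by simp [h1, h2])⟩)

lemma Fval_le {v ℓ : T.ι} (h1 : T.IsLeaf ℓ) (h2 : Anc T v ℓ) : Fval T v ≤ T.leafSum ℓ := by
  classical
  exact Finset.min'_le _ _ (Finset.mem_image_of_mem _ (by simp [h1, h2]))

lemma Fval_mem (v : T.ι) : ∃ ℓ, T.IsLeaf ℓ ∧ Anc T v ℓ ∧ Fval T v = T.leafSum ℓ := by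
  classical
  have := Finset.min'_mem ((Finset.univ.filter (fun ℓ => T.IsLeaf ℓ ∧ Anc T v ℓ)).image T.leafSum)
    (by obtain ⟨ℓ, h1, h2⟩ := exists_leaf_anc T v
        exact ⟨T.leafSum ℓ, Finset.mem_image_of_mem _ (by simp [h1, h2])⟩)
  rw [Finset.mem_image] at this
  obtain ⟨ℓ, hmem, heq⟩ := this
  simp only [Finset.mem_filter, Finset.mem_univ, true_and] at hmem
  exact ⟨ℓ, hmem.1, hmem.2, heq.symm⟩

lemma Fval_leaf {ℓ : T.ι} (h : T.IsLeaf ℓ) : Fval T ℓ = T.leafSum ℓ := by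
  obtain ⟨ℓ', h1, h2, h3⟩ := Fval_mem T ℓ
  rw [anc_leaf_eq T h h2] at h3
  exact h3

lemma Fval_root : Fval T T.root = T.val := by
  apply le_antisymm
  · exact T.le_val _ (fun ℓ hℓ => Fval_le T hℓ (anc_root T ℓ))
  · obtain ⟨ℓ, h1, h2, h3⟩ := Fval_mem T T.root
    rw [h3]
    exact T.val_le_leafSum h1

lemma Fval_le_child {v c : T.ι} (h : c ∈ T.children v) : Fval T v ≤ Fval T c := by
  obtain ⟨ℓ, h1, h2, h3⟩ := Fval_mem T c
  rw [h3]
  exact Fval_le T h1 (anc_trans T (anc_of_child T h) h2)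

open Classical in
/-- the child with minimal `Fval` -/
noncomputable def mnext (v : T.ι) : T.ι :=
  if h : (T.children v).Nonempty then
    (Finset.exists_min_image (T.children v) (Fval T) h).choose
  else v

lemma mnext_mem {v : T.ι} (h : ¬ T.IsLeaf v) : mnext T v ∈ T.children v := by
  classical
  have hne : (T.children v).Nonempty := Finset.nonempty_iff_ne_empty.mpr h
  rw [mnext, dif_pos hne]
  exact (Finset.exists_min_image (T.children v) (Fval T) hne).choose_spec.1

lemma mnext_min {v : T.ι} (h : ¬ T.IsLeaf v) :
    ∀ c ∈ T.children v, Fval T (mnext T v) ≤ Fval T c := by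
  classical
  have hne : (T.children v).Nonempty := Finset.nonempty_iff_ne_empty.mpr h
  rw [mnext, dif_pos hne]
  exact (Finset.exists_min_image (T.children v) (Fval T) hne).choose_spec.2

lemma mnext_leaf {v : T.ι} (h : T.IsLeaf v) : mnext T v = v := by
  classical
  have hne : ¬ (T.children v).Nonempty := by rw [Finset.nonempty_iff_ne_empty]; exact not_not.mpr h
  rw [mnext, dif_neg hne]

lemma Fval_mnext {v : T.ι} (h : ¬ T.IsLeaf v) : Fval T (mnext T v) = Fval T v := by
  apply le_antisymm
  · obtain ⟨ℓ, h1, h2, h3⟩ := Fval_mem T v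
    have hne : ℓ ≠ v := by rintro rfl; exact h h1
    obtain ⟨k, hk, hvk⟩ := h2
    have hkpos : 0 < k := by
      rcases Nat.eq_zero_or_pos k with rfl | h'
      · exact absurd (by simpa using hvk) hne
      · exact h'
    have hc : T.parent^[k-1] ℓ ∈ T.children v := by
      rw [T.mem_children_iff]
      constructor
      · have hk1 : k = (k - 1) + 1 := by omega
        rw [hk1, Function.iterate_succ_apply'] at hvk
        exact hvk
      · exact T.ne_root_of_depth_pos (by rw [T.depth_iterate (by omega)]; omega)
    have hanc : Anc T (T.parent^[k-1] ℓ) ℓ := ⟨k - 1, by omega, rfl⟩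
    calc Fval T (mnext T v) ≤ Fval T (T.parent^[k-1] ℓ) := mnext_min T h _ hc
      _ ≤ T.leafSum ℓ := Fval_le T h1 hanc
      _ = Fval T v := h3.symm
  · exact Fval_le_child T (mnext_mem T h)

end RegTree
namespace RegTree

open SeparatedTree

variable {X : Type*} [MetricSpace X] {r : ℝ} (T : SeparatedTree X r) (C : ℝ)

/-- a kept edge -/
def kedge (u v : T.ι) : Prop :=
  T.parent v = u ∧ v ≠ T.root ∧ (Big T C u ∨ v = mnext T u)

/-- reachable from the root through kept edges -/
def Reach (v : T.ι) : Prop := Relation.ReflTransGen (kedge T C) T.root v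

lemma reach_root : Reach T C T.root := Relation.ReflTransGen.refl

lemma reach_step {v : T.ι} (h : Reach T C v) :
    v = T.root ∨ (Reach T C (T.parent v) ∧ kedge T C (T.parent v) v) := by
  rcases Relation.ReflTransGen.cases_tail h with h1 | ⟨c, hc1, hc2⟩
  · exact Or.inl h1
  · right
    have : T.parent v = c := hc2.1
    rw [this]
    exact ⟨hc1, hc2⟩

lemma reach_iterate {v : T.ι} (h : Reach T C v) :
    ∀ k ≤ T.depth v, Reach T C (T.parent^[k] v) := by
  intro k
  induction k generalizing v with
  | zero => intro _; simpa using h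
  | succ n ih =>
    intro hk
    rw [Function.iterate_succ_apply]
    rcases reach_step T C h with rfl | ⟨h1, -⟩
    · rw [T.depth_root] at hk; omega
    · apply ih h1
      have : v ≠ T.root := T.ne_root_of_depth_pos (by omega)
      have := T.parent_depth v this
      omega

lemma mchain_step {v : T.ι} (h : ¬ T.IsLeaf v) : kedge T C v (mnext T v) := by
  have hm := mnext_mem T h
  rw [T.mem_children_iff] at hm
  exact ⟨hm.1, hm.2, Or.inr rfl⟩

lemma reach_mchain {v : T.ι} (h : Reach T C v) (j : ℕ)
    (hj : ∀ i < j, ¬ T.IsLeaf ((mnext T)^[i] v)) : Reach T C ((mnext T)^[j] v) := by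
  induction j with
  | zero => simpa using h
  | succ n ih =>
    rw [Function.iterate_succ_apply']
    exact Relation.ReflTransGen.tail (ih (fun i hi => hj i (by omega)))
      (mchain_step T C (hj n (by omega)))

lemma depth_mchain (v : T.ι) (n : ℕ) (hj : ∀ i < n, ¬ T.IsLeaf ((mnext T)^[i] v)) :
    T.depth ((mnext T)^[n] v) = T.depth v + n := by
  induction n with
  | zero => simp
  | succ n ih =>
    rw [Function.iterate_succ_apply']
    have := T.depth_child (mnext_mem T (hj n (by omega)))
    rw [this, ih (fun i hi => hj i (by omega))]
    omega

lemma parent_mchain (v : T.ι) (n : ℕ) (hj : ∀ i < n, ¬ T.IsLeaf ((mnext T)^[i] v)) :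
    ∀ j ≤ n, T.parent^[j] ((mnext T)^[n] v) = (mnext T)^[n - j] v := by
  induction n with
  | zero => intro j hj'; interval_cases j; simp
  | succ n ih =>
    intro j hj'
    rcases Nat.eq_zero_or_pos j with rfl | hpos
    · simp
    · obtain ⟨j', rfl⟩ : ∃ j', j = j' + 1 := ⟨j - 1, by omega⟩
      have h2 : T.parent ((mnext T)^[n+1] v) = (mnext T)^[n] v := by
        rw [Function.iterate_succ_apply']
        have hm := mnext_mem T (hj n (by omega))
        rw [T.mem_children_iff] at hm
        exact hm.1
      rw [Function.iterate_succ_apply, h2, ih (fun i hi => hj i (by omega)) j' (by omega)]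
      congr 1
      omega

/-- existence of a big-or-leaf vertex on the minimal chain -/
lemma exPl (v : T.ι) : ∃ j, Big T C ((mnext T)^[j] v) ∨ T.IsLeaf ((mnext T)^[j] v) := by
  obtain ⟨j, hj⟩ := reach_leaf T (mnext T) (fun v h => mnext_mem T h) v
  exact ⟨j, Or.inr hj⟩

open Classical in
/-- number of steps on the minimal chain until the first big-or-leaf vertex -/
noncomputable def nce (v : T.ι) : ℕ := Nat.find (exPl T C v)

lemma nce_spec (v : T.ι) :
    Big T C ((mnext T)^[nce T C v] v) ∨ T.IsLeaf ((mnext T)^[nce T C v] v) := by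
  classical
  exact Nat.find_spec (exPl T C v)

lemma nce_min (v : T.ι) {i : ℕ} (hi : i < nce T C v) :
    ¬ Big T C ((mnext T)^[i] v) ∧ ¬ T.IsLeaf ((mnext T)^[i] v) := by
  classical
  have := Nat.find_min (exPl T C v) hi
  tauto

/-- endpoint of the minimal chain: the first big-or-leaf vertex below `v` -/
noncomputable def ce (v : T.ι) : T.ι := (mnext T)^[nce T C v] v

lemma depth_ce (v : T.ι) : T.depth (ce T C v) = T.depth v + nce T C v :=
  depth_mchain T v _ (fun i hi => (nce_min T C v hi).2)

lemma parent_ce (v : T.ι) {j : ℕ} (hj : j ≤ nce T C v) :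
    T.parent^[j] (ce T C v) = (mnext T)^[nce T C v - j] v :=
  parent_mchain T v _ (fun i hi => (nce_min T C v hi).2) j hj

lemma anc_ce (v : T.ι) : Anc T v (ce T C v) := by
  refine ⟨nce T C v, ?_, ?_⟩
  · rw [depth_ce]; omega
  · rw [parent_ce T C v (le_refl _)]; simp

/-- the new root -/
noncomputable def root' : T.ι := ce T C T.root

lemma reach_root' : Reach T C (root' T C) :=
  reach_mchain T C (reach_root T C) _ (fun i hi => (nce_min T C T.root hi).2)

lemma bigleaf_root' : Big T C (root' T C) ∨ T.IsLeaf (root' T C) := nce_spec T C T.root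

lemma depth_root'_eq : T.depth (root' T C) = nce T C T.root := by
  rw [root', depth_ce, T.depth_root]; omega

lemma strict_anc_root'_small {j : ℕ} (h1 : 1 ≤ j) (h2 : j ≤ T.depth (root' T C)) :
    ¬ Big T C (T.parent^[j] (root' T C)) ∧ ¬ T.IsLeaf (T.parent^[j] (root' T C)) := by
  rw [depth_root'_eq] at h2
  rw [root', parent_ce T C T.root h2]
  exact nce_min T C T.root (by omega)

/-- classification of reachable vertices -/
lemma reach_classify {u : T.ι} (h : Reach T C u) :
    (∃ j < nce T C T.root, u = (mnext T)^[j] T.root) ∨ u = root' T C ∨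
    (∃ n, 1 ≤ n ∧ n ≤ T.depth u ∧ T.parent^[n] u = root' T C) := by
  induction h with
  | refl =>
    rcases Nat.eq_zero_or_pos (nce T C T.root) with h0 | h0
    · right; left; rw [root', ce, h0]; simp
    · left; exact ⟨0, h0, by simp⟩
  | tail hab hbc ih =>
    rename_i b c
    obtain ⟨hp, hcr, hbig⟩ := hbc
    have hdc : T.depth b + 1 = T.depth c := by rw [← hp]; exact T.parent_depth c hcr
    rcases ih with ⟨j, hj, rfl⟩ | rfl | ⟨n, hn1, hn2, hn3⟩
    · have hnb : ¬ Big T C ((mnext T)^[j] T.root) := (nce_min T C T.root hj).1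
      have hc : c = (mnext T)^[j+1] T.root := by
        rcases hbig with hb | hb
        · exact absurd hb hnb
        · rw [hb, Function.iterate_succ_apply']
      rcases Nat.lt_or_ge (j+1) (nce T C T.root) with h' | h'
      · exact Or.inl ⟨j+1, h', hc⟩
      · right; left
        have : j + 1 = nce T C T.root := by omega
        rw [hc, root', ce, this]
    · right; right
      exact ⟨1, le_refl _, by omega, by simpa using hp⟩
    · right; right
      refine ⟨n + 1, by omega, by omega, ?_⟩
      rw [Function.iterate_succ_apply, hp]
      exact hn3

end RegTree
namespace RegTree

open SeparatedTree

variable {X : Type*} [MetricSpace X] {r : ℝ} (T : SeparatedTree X r) (C : ℝ)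

lemma term_bound (hr : 4 ≤ r) (hC : 1 ≤ C) {ℓ : T.ι} {j : ℕ} (hj : j ≤ T.depth ℓ)
    (hnb : ¬ Big T C (T.pathVertex ℓ j)) :
    T.pterm ℓ j ≤ C * r ^ (T.s T.root + 1) * (1/4 : ℝ) ^ j := by
  have hr0 : (0:ℝ) < r := by linarith
  have hC0 : (0:ℝ) < C := by linarith
  have hrne : r ≠ 0 := ne_of_gt hr0
  set v := T.pathVertex ℓ j with hv
  set t : ℤ := T.s T.root - T.s v with htdef
  have ht2 : (2 * j : ℤ) ≤ t := by
    have := T.s_pathVertex_le hj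
    rw [← hv] at this
    omega
  have hΔ1 : (1:ℝ) ≤ (T.Δ v : ℝ) := by
    have : 1 ≤ T.Δ v := by unfold SeparatedTree.Δ; omega
    exact_mod_cast this
  have hlog : Real.log (T.Δ v) ≤ C ^ 2 * r ^ 2 * (4:ℝ) ^ t := by
    have hlt : (T.Δ v : ℝ) < Real.exp (C ^ 2 * r ^ 2 * (4:ℝ) ^ t) := by
      have hnb' : ¬ Real.exp (C ^ 2 * r ^ 2 * (4:ℝ) ^ t) ≤ (T.Δ v : ℝ) := hnb
      exact not_le.mp hnb'
    have := (Real.log_lt_iff_lt_exp (by linarith)).mpr hlt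
    linarith
  have hcr2 : (0:ℝ) ≤ C * r * (2:ℝ) ^ t := by positivity
  have heq : C ^ 2 * r ^ 2 * (4:ℝ) ^ t = (C * r * (2:ℝ) ^ t) ^ 2 := by
    have h4 : ((2:ℝ) ^ t) ^ 2 = (4:ℝ) ^ t := by
      rw [sq, ← mul_zpow]
      norm_num
    rw [mul_pow, mul_pow, h4]
  have hsq : Real.sqrt (Real.log (T.Δ v)) ≤ C * r * (2:ℝ) ^ t := by
    calc Real.sqrt (Real.log (T.Δ v)) ≤ Real.sqrt ((C * r * (2:ℝ) ^ t) ^ 2) := by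
          apply Real.sqrt_le_sqrt
          rw [← heq]
          exact hlog
      _ = C * r * (2:ℝ) ^ t := Real.sqrt_sq hcr2
  have hterm : T.pterm ℓ j ≤ r ^ (T.s v) * (C * r * (2:ℝ) ^ t) := by
    unfold pterm
    rw [← hv]
    exact mul_le_mul_of_nonneg_left hsq (by positivity)
  have hkey : r ^ (T.s v) * (2:ℝ) ^ t ≤ r ^ (T.s T.root) * (1/4:ℝ) ^ j := by
    have hsv : r ^ (T.s v) = r ^ (T.s T.root) * (r ^ t)⁻¹ := by
      rw [← zpow_neg, ← zpow_add₀ hrne]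
      congr 1
      omega
    have hfrac : r ^ (T.s v) * (2:ℝ) ^ t = r ^ (T.s T.root) * (2 / r) ^ t := by
      rw [hsv, div_zpow]
      field_simp
    rw [hfrac]
    apply mul_le_mul_of_nonneg_left ?_ (by positivity)
    have hb0 : (0:ℝ) < 2 / r := by positivity
    have hb1 : (2:ℝ) / r ≤ 1/2 := by
      rw [div_le_div_iff₀ hr0 (by norm_num)]
      linarith
    calc (2/r : ℝ) ^ t ≤ (2/r : ℝ) ^ (2 * j : ℤ) := by
          apply zpow_le_zpow_right_of_le_one₀ hb0 (by linarith) ht2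
      _ = ((2/r : ℝ) ^ 2) ^ j := by
          rw [show (2 * j : ℤ) = ((2 * j : ℕ) : ℤ) by push_cast; ring, zpow_natCast, pow_mul]
      _ ≤ ((1/4 : ℝ)) ^ j := by
          apply pow_le_pow_left₀ (sq_nonneg _)
          nlinarith
  calc T.pterm ℓ j ≤ r ^ (T.s v) * (C * r * (2:ℝ) ^ t) := hterm
    _ = (C * r) * (r ^ (T.s v) * (2:ℝ) ^ t) := by ring
    _ ≤ (C * r) * (r ^ (T.s T.root) * (1/4:ℝ) ^ j) := by
        apply mul_le_mul_of_nonneg_left hkey (by positivity)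
    _ = C * r ^ (T.s T.root + 1) * (1/4 : ℝ) ^ j := by
        rw [zpow_add_one₀ hrne]
        ring

lemma geom_quarter (n : ℕ) : ∑ j ∈ Finset.range n, ((1/4:ℝ)) ^ j ≤ 4/3 := by
  have h := geom_sum_eq (by norm_num : (1/4:ℝ) ≠ 1) n
  rw [h]
  have h4 : (0:ℝ) ≤ (1/4:ℝ) ^ n := by positivity
  rw [div_le_iff_of_neg (by norm_num : (1/4:ℝ) - 1 < 0)]
  linarith

lemma sum_small (hr : 4 ≤ r) (hC : 1 ≤ C) {ℓ : T.ι} {A : Finset ℕ}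
    (hA : A ⊆ Finset.range (T.depth ℓ + 1))
    (hnb : ∀ j ∈ A, ¬ Big T C (T.pathVertex ℓ j)) :
    ∑ j ∈ A, T.pterm ℓ j ≤ (4/3) * (C * r ^ (T.s T.root + 1)) := by
  have hr0 : (0:ℝ) < r := by linarith
  have hC0 : (0:ℝ) < C := by linarith
  calc ∑ j ∈ A, T.pterm ℓ j
      ≤ ∑ j ∈ A, C * r ^ (T.s T.root + 1) * (1/4 : ℝ) ^ j := by
        apply Finset.sum_le_sum
        intro j hjA
        have hj : j ≤ T.depth ℓ := by
          have := hA hjA; rw [Finset.mem_range] at this; omega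
        exact term_bound T C hr hC hj (hnb j hjA)
    _ ≤ ∑ j ∈ Finset.range (T.depth ℓ + 1), C * r ^ (T.s T.root + 1) * (1/4 : ℝ) ^ j := by
        apply Finset.sum_le_sum_of_subset_of_nonneg hA
        intro j _ _
        positivity
    _ = C * r ^ (T.s T.root + 1) * ∑ j ∈ Finset.range (T.depth ℓ + 1), (1/4 : ℝ) ^ j := by
        rw [Finset.mul_sum]
    _ ≤ C * r ^ (T.s T.root + 1) * (4/3) := by
        apply mul_le_mul_of_nonneg_left (geom_quarter _) (by positivity)
    _ = (4/3) * (C * r ^ (T.s T.root + 1)) := by ring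

lemma big_root' (hr : 4 ≤ r) (hC : 1 ≤ C)
    (hval : 4 * C * r ^ (T.s T.root + 1) ≤ T.val) : Big T C (root' T C) := by
  have hr0 : (0:ℝ) < r := by linarith
  have hC0 : (0:ℝ) < C := by linarith
  by_contra hnb
  have hleaf : T.IsLeaf (root' T C) := (bigleaf_root' T C).resolve_left hnb
  have hsmall : ∀ j ∈ Finset.range (T.depth (root' T C) + 1),
      ¬ Big T C (T.pathVertex (root' T C) j) := by
    intro j hj
    rw [Finset.mem_range] at hj
    rcases Nat.lt_or_ge j (T.depth (root' T C)) with h' | h'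
    · have := strict_anc_root'_small T C (j := T.depth (root' T C) - j) (by omega) (by omega)
      unfold SeparatedTree.pathVertex
      exact this.1
    · have hj' : j = T.depth (root' T C) := by omega
      rw [hj', T.pathVertex_self]
      intro hbig
      exact not_isLeaf_of_big T C hr hC hbig hleaf
  have h1 : T.val ≤ T.leafSum (root' T C) := T.val_le_leafSum hleaf
  have h2 : T.leafSum (root' T C) ≤ (4/3) * (C * r ^ (T.s T.root + 1)) :=
    sum_small T C hr hC (le_refl _) hsmall
  have h3 : (0:ℝ) < C * r ^ (T.s T.root + 1) := by positivity
  linarith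

end RegTree
namespace RegTree

open SeparatedTree

variable {X : Type*} [MetricSpace X] {r : ℝ} (T : SeparatedTree X r) (C : ℝ)

/-- membership in the new tree: reachable and big-or-leaf -/
def TMem (v : T.ι) : Prop := Reach T C v ∧ (Big T C v ∨ T.IsLeaf v)

lemma tmem_root' : TMem T C (root' T C) := ⟨reach_root' T C, bigleaf_root' T C⟩

lemma exBigAnc (hbr : Big T C (root' T C)) {v : T.ι} (hv : TMem T C v)
    (hne : v ≠ root' T C) :
    ∃ n, (1 ≤ n ∧ n ≤ T.depth v) ∧ Big T C (T.parent^[n] v) := by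
  rcases reach_classify T C hv.1 with ⟨j, hj, rfl⟩ | h | ⟨n, hn1, hn2, hn3⟩
  · exact absurd hv.2 (by have := nce_min T C T.root hj; tauto)
  · exact absurd h hne
  · exact ⟨n, ⟨hn1, hn2⟩, by rw [hn3]; exact hbr⟩

open Classical in
/-- distance to the nearest big strict ancestor -/
noncomputable def jdx (v : T.ι) : ℕ :=
  if h : ∃ n, (1 ≤ n ∧ n ≤ T.depth v) ∧ Big T C (T.parent^[n] v) then Nat.find h else 0

lemma jdx_spec {v : T.ι} (h : ∃ n, (1 ≤ n ∧ n ≤ T.depth v) ∧ Big T C (T.parent^[n] v)) :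
    (1 ≤ jdx T C v ∧ jdx T C v ≤ T.depth v) ∧ Big T C (T.parent^[jdx T C v] v) := by
  classical
  rw [jdx, dif_pos h]
  exact Nat.find_spec h

lemma jdx_min {v : T.ι} (h : ∃ n, (1 ≤ n ∧ n ≤ T.depth v) ∧ Big T C (T.parent^[n] v))
    {i : ℕ} (h1 : 1 ≤ i) (h2 : i < jdx T C v) : ¬ Big T C (T.parent^[i] v) := by
  classical
  rw [jdx, dif_pos h] at h2
  have := Nat.find_min h h2
  have hle : i ≤ T.depth v := by
    have := (jdx_spec T C h).1.2
    rw [jdx, dif_pos h] at this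
    omega
  tauto

/-- the new parent map (on the underlying type) -/
noncomputable def pstar (v : T.ι) : T.ι := T.parent^[jdx T C v] v

lemma pstar_def (v : T.ι) : pstar T C v = T.parent^[jdx T C v] v := rfl

open Classical in
/-- the new depth: the number of big strict ancestors -/
noncomputable def ddep (v : T.ι) : ℕ :=
  ((Finset.range (T.depth v)).filter (fun i => Big T C (T.parent^[i+1] v))).card

open Classical in
lemma ddep_step {v : T.ι} (hv : v ≠ T.root) :
    ddep T C v = ddep T C (T.parent v) + (if Big T C (T.parent v) then 1 else 0) := by
  have hd : T.depth v = T.depth (T.parent v) + 1 := (T.parent_depth v hv).symm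
  rw [ddep, ddep, Finset.card_filter, Finset.card_filter, hd, Finset.sum_range_succ']
  have hshift : ∀ i : ℕ, T.parent^[i + 1 + 1] v = T.parent^[i + 1] (T.parent v) :=
    fun i => Function.iterate_succ_apply T.parent (i+1) v
  simp only [hshift, zero_add, Function.iterate_one]

open Classical in
lemma ddep_of_first_big {j : ℕ} :
    ∀ {v : T.ι}, 1 ≤ j → j ≤ T.depth v → (∀ i, 1 ≤ i → i < j → ¬ Big T C (T.parent^[i] v)) →
    Big T C (T.parent^[j] v) → ddep T C v = ddep T C (T.parent^[j] v) + 1 := by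
  induction j with
  | zero => omega
  | succ n ih =>
    intro v _ hjd hsm hbig
    have hv : v ≠ T.root := T.ne_root_of_depth_pos (by omega)
    have hdp : T.depth (T.parent v) = T.depth v - 1 := by
      have := T.parent_depth v hv; omega
    rcases Nat.eq_zero_or_pos n with rfl | hn
    · rw [ddep_step T C hv]
      simp only [zero_add, Function.iterate_one] at hbig ⊢
      rw [if_pos hbig]
    · have hnb : ¬ Big T C (T.parent v) := by
        have := hsm 1 (le_refl _) (by omega)
        simpa using this
      rw [ddep_step T C hv, if_neg hnb]
      rw [Function.iterate_succ_apply] at hbig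
      have h2 := ih (v := T.parent v) hn (by omega)
        (fun i hi1 hi2 => by
          have := hsm (i+1) (by omega) (by omega)
          rwa [Function.iterate_succ_apply] at this)
        hbig
      rw [show T.parent^[n] (T.parent v) = T.parent^[n+1] v from (Function.iterate_succ_apply T.parent n v).symm] at h2
      omega

lemma ddep_root' : ddep T C (root' T C) = 0 := by
  classical
  rw [ddep, Finset.card_eq_zero, Finset.filter_eq_empty_iff]
  intro i hi
  rw [Finset.mem_range] at hi
  exact (strict_anc_root'_small T C (by omega) (by omega)).1

lemma ddep_pos {v : T.ι}
    (h : ∃ n, (1 ≤ n ∧ n ≤ T.depth v) ∧ Big T C (T.parent^[n] v)) : 0 < ddep T C v := by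
  classical
  obtain ⟨n, ⟨h1, h2⟩, h3⟩ := h
  rw [ddep, Finset.card_pos]
  refine ⟨n - 1, ?_⟩
  rw [Finset.mem_filter, Finset.mem_range]
  constructor
  · omega
  · have : n - 1 + 1 = n := by omega
    rw [this]
    exact h3

lemma chain_down {u : T.ι} (hu : Reach T C u) :
    ∀ {i : ℕ}, i ≤ T.depth u → (∀ j, 1 ≤ j → j ≤ i → ¬ Big T C (T.parent^[j] u)) →
    ∀ j ≤ i, T.parent^[j] u = (mnext T)^[i - j] (T.parent^[i] u) := by
  intro i
  induction i with
  | zero => intro _ _ j hj; interval_cases j; simp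
  | succ n ih =>
    intro hid hsm j hj
    have key : T.parent^[n] u = mnext T (T.parent^[n+1] u) := by
      have hw : Reach T C (T.parent^[n] u) := reach_iterate T C hu n (by omega)
      have hwr : T.parent^[n] u ≠ T.root :=
        T.ne_root_of_depth_pos (by rw [T.depth_iterate (by omega : n ≤ T.depth u)]; omega)
      rcases reach_step T C hw with h | ⟨-, hke⟩
      · exact absurd h hwr
      · rcases hke.2.2 with hb | hm
        · exfalso
          apply hsm (n+1) (by omega) (by omega)
          rwa [Function.iterate_succ_apply']
        · have hps : T.parent (T.parent^[n] u) = T.parent^[n+1] u :=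
            (Function.iterate_succ_apply' T.parent n u).symm
          rw [hps] at hm
          exact hm
    rcases Nat.lt_or_ge j (n+1) with h' | h'
    · have hstep := ih (by omega) (fun j hj1 hj2 => hsm j hj1 (by omega)) j (by omega)
      have harith : n + 1 - j = (n - j) + 1 := by omega
      rw [harith, Function.iterate_succ_apply (mnext T) (n-j) (T.parent^[n+1] u), ← key]
      exact hstep
    · have : j = n + 1 := by omega
      subst this
      simp

lemma nce_le {v : T.ι} {n : ℕ}
    (h : Big T C ((mnext T)^[n] v) ∨ T.IsLeaf ((mnext T)^[n] v)) : nce T C v ≤ n := by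
  classical
  exact Nat.find_le h

lemma nce_eq {v : T.ι} {n : ℕ}
    (h1 : Big T C ((mnext T)^[n] v) ∨ T.IsLeaf ((mnext T)^[n] v))
    (h2 : ∀ i < n, ¬ Big T C ((mnext T)^[i] v) ∧ ¬ T.IsLeaf ((mnext T)^[i] v)) :
    nce T C v = n := by
  have hle := nce_le T C h1
  rcases Nat.lt_or_ge (nce T C v) n with h' | h'
  · have := h2 _ h'
    have := nce_spec T C v
    tauto
  · omega

/-- every non-root member of the new tree is the chain endpoint of the child of its
new parent through which it descends -/
lemma eq_ce {u : T.ι} (hu : TMem T C u)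
    (h : ∃ n, (1 ≤ n ∧ n ≤ T.depth u) ∧ Big T C (T.parent^[n] u)) :
    nce T C (T.parent^[jdx T C u - 1] u) = jdx T C u - 1 ∧
    u = ce T C (T.parent^[jdx T C u - 1] u) := by
  obtain ⟨⟨hj1, hjd⟩, hjb⟩ := jdx_spec T C h
  set J := jdx T C u with hJ
  set c := T.parent^[J-1] u with hc
  have P := chain_down T C hu.1 (i := J - 1) (by omega)
    (fun j hj1' hj2' => jdx_min T C h hj1' (by omega))
  have hmc : ∀ i ≤ J - 1, (mnext T)^[i] c = T.parent^[J-1-i] u := by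
    intro i hi
    have := P (J - 1 - i) (by omega)
    rw [this]
    congr 1
    omega
  have hnce : nce T C c = J - 1 := by
    apply nce_eq
    · rw [hmc (J-1) (le_refl _)]
      simpa using hu.2
    · intro i hi
      rw [hmc i (by omega)]
      set jj := J - 1 - i with hjj
      have hjj1 : 1 ≤ jj := by omega
      have hjjJ : jj ≤ J - 1 := by omega
      constructor
      · exact jdx_min T C h hjj1 (by omega)
      · intro hleaf
        have hch : T.parent^[jj-1] u ∈ T.children (T.parent^[jj] u) := by
          rw [T.mem_children_iff]
          constructor
          · obtain ⟨jj', hjj'⟩ : ∃ jj', jj = jj' + 1 := ⟨jj - 1, by omega⟩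
            rw [hjj', Nat.add_sub_cancel, Function.iterate_succ_apply']
          · exact T.ne_root_of_depth_pos
              (by rw [T.depth_iterate (by omega : jj - 1 ≤ T.depth u)]; omega)
        rw [hleaf] at hch
        simp at hch
  constructor
  · exact hnce
  · rw [ce, hnce, hmc (J-1) (le_refl _)]
    simp

lemma ce_def (v : T.ι) : ce T C v = (mnext T)^[nce T C v] v := rfl

lemma bigleaf_ce (v : T.ι) : Big T C (ce T C v) ∨ T.IsLeaf (ce T C v) := by
  rw [ce_def]
  exact nce_spec T C v

lemma reach_ce {x c : T.ι} (hx : Reach T C x) (hbx : Big T C x) (hc : c ∈ T.children x) :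
    Reach T C (ce T C c) := by
  have h1 : Reach T C c := by
    rw [T.mem_children_iff] at hc
    exact Relation.ReflTransGen.tail hx ⟨hc.1, hc.2, Or.inl hbx⟩
  exact reach_mchain T C h1 _ (fun i hi => (nce_min T C c hi).2)

lemma jdx_ce {x c : T.ι} (hbx : Big T C x) (hc : c ∈ T.children x) :
    (∃ n, (1 ≤ n ∧ n ≤ T.depth (ce T C c)) ∧ Big T C (T.parent^[n] (ce T C c))) ∧
    jdx T C (ce T C c) = nce T C c + 1 ∧ pstar T C (ce T C c) = x := by
  have hdc : T.depth c = T.depth x + 1 := T.depth_child hc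
  have hparent : T.parent^[nce T C c + 1] (ce T C c) = x := by
    rw [Function.iterate_succ_apply', parent_ce T C c (le_refl _)]
    simp only [Nat.sub_self, Function.iterate_zero, id_eq]
    exact (T.mem_children_iff.mp hc).1
  have hdce : T.depth (ce T C c) = T.depth c + nce T C c := depth_ce T C c
  have hex : ∃ n, (1 ≤ n ∧ n ≤ T.depth (ce T C c)) ∧ Big T C (T.parent^[n] (ce T C c)) :=
    ⟨nce T C c + 1, ⟨by omega, by omega⟩, by rw [hparent]; exact hbx⟩
  have hsmall : ∀ i, 1 ≤ i → i ≤ nce T C c → ¬ Big T C (T.parent^[i] (ce T C c)) := by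
    intro i h1 h2
    rw [parent_ce T C c h2]
    exact (nce_min T C c (by omega)).1
  have hjdx : jdx T C (ce T C c) = nce T C c + 1 := by
    obtain ⟨⟨hj1, hjd⟩, hjb⟩ := jdx_spec T C hex
    classical
    have hle : jdx T C (ce T C c) ≤ nce T C c + 1 := by
      rw [jdx, dif_pos hex]
      exact Nat.find_le ⟨⟨by omega, by omega⟩, by rw [hparent]; exact hbx⟩
    rcases Nat.lt_or_ge (jdx T C (ce T C c)) (nce T C c + 1) with h' | h'
    · exact absurd hjb (hsmall _ hj1 (by omega))
    · omega
  refine ⟨hex, hjdx, ?_⟩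
  rw [pstar, hjdx, hparent]

lemma depth_root'_le {x : T.ι} (hx : Reach T C x) (hbx : Big T C x) :
    T.depth (root' T C) ≤ T.depth x := by
  rcases reach_classify T C hx with ⟨j, hj, rfl⟩ | h | ⟨n, hn1, hn2, hn3⟩
  · exact absurd hbx (nce_min T C T.root hj).1
  · rw [h]
  · have := T.depth_iterate hn2
    rw [hn3] at this
    omega

end RegTree
namespace RegTree

open SeparatedTree

variable {X : Type*} [MetricSpace X] {r : ℝ} (T : SeparatedTree X r) (C : ℝ)

/-- the vertex type of the new tree -/
def ιs : Type := {v : T.ι // TMem T C v}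

noncomputable instance : Fintype (ιs T C) := by
  have : Finite (ιs T C) := by
    have : Finite T.ι := Finite.of_fintype T.ι
    exact Subtype.finite
  exact Fintype.ofFinite _

instance : DecidableEq (ιs T C) := Subtype.instDecidableEq

/-- the new root -/
noncomputable def rootS : ιs T C := ⟨root' T C, tmem_root' T C⟩

variable {T C} (hbr : Big T C (root' T C))

/-- the new parent map -/
noncomputable def parentS (v : ιs T C) : ιs T C :=
  if h : v.1 = root' T C then rootS T C
  else ⟨pstar T C v.1, by
    have hex := exBigAnc T C hbr v.2 h
    obtain ⟨⟨h1, h2⟩, h3⟩ := jdx_spec T C hex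
    exact ⟨reach_iterate T C v.2.1 _ h2, Or.inl h3⟩⟩

lemma parentS_root : parentS hbr (rootS T C) = rootS T C := dif_pos rfl

lemma parentS_ne {v : ιs T C} (h : v.1 ≠ root' T C) :
    (parentS hbr v).1 = pstar T C v.1 := by
  rw [parentS]; exact congrArg Subtype.val (dif_neg h)

lemma ne_rootS_iff {v : ιs T C} : v ≠ rootS T C ↔ v.1 ≠ root' T C := by
  constructor
  · intro h h'
    exact h (Subtype.ext h')
  · intro h h'
    rw [h'] at h
    exact h rfl

lemma depth_rootS : ddep T C (rootS T C).1 = 0 := ddep_root' T C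

lemma parent_depthS {v : ιs T C} (h : v ≠ rootS T C) :
    ddep T C (parentS hbr v).1 + 1 = ddep T C v.1 := by
  have hne := (ne_rootS_iff).mp h
  rw [parentS_ne hbr hne]
  have hex := exBigAnc T C hbr v.2 hne
  obtain ⟨⟨h1, h2⟩, h3⟩ := jdx_spec T C hex
  have := ddep_of_first_big T C (j := jdx T C v.1) (v := v.1) h1 h2
    (fun i hi1 hi2 => jdx_min T C hex hi1 hi2) h3
  rw [pstar]
  omega

include hbr in
lemma root_of_depth_zeroS {v : ιs T C} (h : ddep T C v.1 = 0) : v = rootS T C := by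
  by_contra hne
  have hne' := (ne_rootS_iff).mp hne
  have := ddep_pos T C (exBigAnc T C hbr v.2 hne')
  omega

lemma label_decreaseS {v : ιs T C} (h : v ≠ rootS T C) :
    T.s v.1 ≤ T.s (parentS hbr v).1 - 2 := by
  have hne := (ne_rootS_iff).mp h
  rw [parentS_ne hbr hne]
  have hex := exBigAnc T C hbr v.2 hne
  obtain ⟨⟨h1, h2⟩, h3⟩ := jdx_spec T C hex
  have := T.s_iterate (k := jdx T C v.1) (v := v.1) h2
  rw [pstar]
  omega

lemma underlying_iterate : ∀ (k : ℕ) (w : ιs T C),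
    ∃ b, b ≤ T.depth w.1 ∧ ((parentS hbr)^[k] w).1 = T.parent^[b] w.1 := by
  intro k
  induction k with
  | zero => intro w; exact ⟨0, by omega, rfl⟩
  | succ n ih =>
    intro w
    obtain ⟨b, hb, heq⟩ := ih w
    rw [Function.iterate_succ_apply']
    set w1 := (parentS hbr)^[n] w with hw1
    by_cases h : w1.1 = root' T C
    · have hp : parentS hbr w1 = rootS T C := by rw [parentS]; exact dif_pos h
      refine ⟨b, hb, ?_⟩
      rw [← heq]
      exact (congrArg Subtype.val hp).trans h.symm
    · rw [parentS_ne hbr h]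
      have hex := exBigAnc T C hbr w1.2 h
      obtain ⟨⟨h1, h2⟩, h3⟩ := jdx_spec T C hex
      refine ⟨jdx T C w1.1 + b, ?_, ?_⟩
      · have hdw1 : T.depth w1.1 = T.depth w.1 - b := by
          rw [heq, T.depth_iterate hb]
        omega
      · rw [pstar, Function.iterate_add_apply, ← heq]

lemma isdesc_underlying {u w : ιs T C} (h : IsDescendant (parentS hbr) u w) :
    IsDescendant T.parent u.1 w.1 := by
  obtain ⟨k, hk⟩ := h
  obtain ⟨b, hb, heq⟩ := underlying_iterate hbr k w
  exact ⟨b, by rw [← heq, hk]⟩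

/-- data of the child of `x` through which a non-root vertex descends -/
lemma child_data {u x : ιs T C} (hu : u ≠ rootS T C) (hp : parentS hbr u = x) :
    T.parent^[jdx T C u.1 - 1] u.1 ∈ T.children x.1 ∧
    IsDescendant T.parent (T.parent^[jdx T C u.1 - 1] u.1) u.1 ∧
    nce T C (T.parent^[jdx T C u.1 - 1] u.1) = jdx T C u.1 - 1 ∧
    u.1 = ce T C (T.parent^[jdx T C u.1 - 1] u.1) := by
  have hne := (ne_rootS_iff).mp hu
  have hex := exBigAnc T C hbr u.2 hne
  obtain ⟨⟨h1, h2⟩, h3⟩ := jdx_spec T C hex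
  have hx : x.1 = T.parent^[jdx T C u.1] u.1 := by
    rw [← hp, parentS_ne hbr hne, pstar]
  obtain ⟨hnce, hce⟩ := eq_ce T C u.2 hex
  refine ⟨?_, ⟨jdx T C u.1 - 1, rfl⟩, hnce, hce⟩
  rw [T.mem_children_iff]
  constructor
  · obtain ⟨J', hJ'⟩ : ∃ J', jdx T C u.1 = J' + 1 := ⟨jdx T C u.1 - 1, by omega⟩
    rw [hx, hJ', Nat.add_sub_cancel, Function.iterate_succ_apply']
  · exact T.ne_root_of_depth_pos
      (by rw [T.depth_iterate (by omega : jdx T C u.1 - 1 ≤ T.depth u.1)]; omega)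

lemma sep_parentS (x u w : ιs T C) (hu : u ≠ rootS T C) (hp : parentS hbr u = x)
    (hd : IsDescendant (parentS hbr) u w) :
    (1 / 2) * r ^ (T.s x.1 - 1) ≤ dist (T.pos x.1) (T.pos w.1) := by
  obtain ⟨hc, hdesc, -, -⟩ := child_data hbr hu hp
  have hdw : IsDescendant T.parent (T.parent^[jdx T C u.1 - 1] u.1) w.1 := by
    obtain ⟨k, hk⟩ := isdesc_underlying hbr hd
    exact ⟨jdx T C u.1 - 1 + k, by rw [Function.iterate_add_apply, hk]⟩
  rw [T.mem_children_iff] at hc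
  exact T.sep_parent x.1 _ w.1 hc.2 hc.1 hdw

lemma sep_siblingsS (x u u' w w' : ιs T C) (hu : u ≠ rootS T C) (hu' : u' ≠ rootS T C)
    (hp : parentS hbr u = x) (hp' : parentS hbr u' = x) (hne : u ≠ u')
    (hd : IsDescendant (parentS hbr) u w) (hd' : IsDescendant (parentS hbr) u' w') :
    (1 / 2) * r ^ (T.s x.1 - 1) ≤ dist (T.pos w.1) (T.pos w'.1) := by
  obtain ⟨hc, hdesc, hnce, hceq⟩ := child_data hbr hu hp
  obtain ⟨hc', hdesc', hnce', hceq'⟩ := child_data hbr hu' hp'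
  set c := T.parent^[jdx T C u.1 - 1] u.1 with hcdef
  set c' := T.parent^[jdx T C u'.1 - 1] u'.1 with hcdef'
  have hcc : c ≠ c' := by
    intro hcc
    apply hne
    apply Subtype.ext
    rw [hceq, hceq', hcc]
  have hdw : IsDescendant T.parent c w.1 := by
    obtain ⟨k, hk⟩ := isdesc_underlying hbr hd
    exact ⟨jdx T C u.1 - 1 + k, by rw [Function.iterate_add_apply, hk]⟩
  have hdw' : IsDescendant T.parent c' w'.1 := by
    obtain ⟨k, hk⟩ := isdesc_underlying hbr hd'
    exact ⟨jdx T C u'.1 - 1 + k, by rw [Function.iterate_add_apply, hk]⟩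
  rw [T.mem_children_iff] at hc hc'
  exact T.sep_siblings x.1 c c' w.1 w'.1 hc.2 hc'.2 hc.1 hc'.1 hcc hdw hdw'

/-- the contracted tree -/
noncomputable def Tprime : SeparatedTree X r where
  ι := ιs T C
  fintypeι := inferInstance
  decEqι := inferInstance
  pos := fun v => T.pos v.1
  root := rootS T C
  parent := parentS hbr
  depth := fun v => ddep T C v.1
  s := fun v => T.s v.1
  depth_root := depth_rootS
  parent_depth := fun v hv => parent_depthS hbr hv
  root_of_depth_zero := fun v hv => root_of_depth_zeroS hbr hv
  label_decrease := fun v hv => label_decreaseS hbr hv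
  sep_parent := fun x u w hu hp hd => sep_parentS hbr x u w hu hp hd
  sep_siblings := fun x u u' w w' hu hu' hp hp' hne hd hd' =>
    sep_siblingsS hbr x u u' w w' hu hu' hp hp' hne hd hd'
  diam_subtree := fun x w w' hd hd' =>
    T.diam_subtree x.1 w.1 w'.1 (isdesc_underlying hbr hd) (isdesc_underlying hbr hd')

end RegTree

namespace RegTree
attribute [irreducible] mnext Fval nce ce jdx pstar ddep root'
end RegTree
namespace RegTree

open SeparatedTree

variable {X : Type*} [MetricSpace X] {r : ℝ} {T : SeparatedTree X r} {C : ℝ}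
variable (hbr : Big T C (root' T C))

lemma mem_childrenS_iff {u x : ιs T C} :
    u ∈ (Tprime hbr).children x ↔ parentS hbr u = x ∧ u ≠ rootS T C :=
  (Tprime hbr).mem_children_iff

lemma tmem_ce {x : ιs T C} (hbx : Big T C x.1) {c : T.ι} (hc : c ∈ T.children x.1) :
    TMem T C (ce T C c) :=
  ⟨reach_ce T C x.2.1 hbx hc, bigleaf_ce T C c⟩

lemma ce_ne_root' {x : ιs T C} (hbx : Big T C x.1) {c : T.ι} (hc : c ∈ T.children x.1) :
    ce T C c ≠ root' T C := by
  intro h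
  have h1 : T.depth (ce T C c) = T.depth c + nce T C c := depth_ce T C c
  have h2 : T.depth c = T.depth x.1 + 1 := T.depth_child hc
  have h3 := depth_root'_le T C x.2.1 hbx
  rw [h] at h1
  omega

lemma ceS_mem_children {x : ιs T C} (hbx : Big T C x.1) {c : T.ι} (hc : c ∈ T.children x.1) :
    (⟨ce T C c, tmem_ce hbx hc⟩ : ιs T C) ∈ (Tprime hbr).children x := by
  refine (mem_childrenS_iff hbr).mpr ?_
  obtain ⟨hex, hjdx, hpstar⟩ := jdx_ce T C hbx hc
  constructor
  · apply Subtype.ext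
    exact (parentS_ne hbr (v := ⟨ce T C c, tmem_ce hbx hc⟩) (ce_ne_root' hbx hc)).trans hpstar
  · exact (ne_rootS_iff (v := ⟨ce T C c, tmem_ce hbx hc⟩)).mpr (ce_ne_root' hbx hc)

lemma childS_data {u x : ιs T C} (hu : u ∈ (Tprime hbr).children x) :
    T.parent^[jdx T C u.1 - 1] u.1 ∈ T.children x.1 ∧
    u.1 = ce T C (T.parent^[jdx T C u.1 - 1] u.1) := by
  rw [mem_childrenS_iff] at hu
  obtain ⟨h1, h2, -, h4⟩ := child_data hbr hu.2 hu.1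
  exact ⟨h1, h4⟩

lemma card_childrenS {x : ιs T C} (hbx : Big T C x.1) :
    ((Tprime hbr).children x).card = (T.children x.1).card := by
  classical
  symm
  refine Finset.card_bij' (i := fun (c : T.ι) (hc : c ∈ T.children x.1) =>
      (⟨ce T C c, tmem_ce hbx hc⟩ : ιs T C))
    (j := fun (u : ιs T C) (_ : u ∈ (Tprime hbr).children x) =>
      T.parent^[jdx T C u.1 - 1] u.1) ?hi ?hj ?left ?right
  case hi =>
    intro c hc
    exact ceS_mem_children hbr hbx hc
  case hj =>
    intro u hu
    exact (childS_data hbr hu).1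
  case left =>
    intro c hc
    obtain ⟨hex, hjdx, hpstar⟩ := jdx_ce T C hbx hc
    simp only [hjdx, Nat.add_sub_cancel]
    rw [parent_ce T C c (le_refl _)]
    simp
  case right =>
    intro u hu
    apply Subtype.ext
    exact (childS_data hbr hu).2.symm

lemma delta_S {x : ιs T C} (hbx : Big T C x.1) : (Tprime hbr).Δ x = T.Δ x.1 := by
  unfold SeparatedTree.Δ
  rw [card_childrenS hbr hbx]

lemma isLeafS_iff (hr : 4 ≤ r) (hC : 1 ≤ C) {x : ιs T C} :
    (Tprime hbr).IsLeaf x ↔ T.IsLeaf x.1 := by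
  constructor
  · intro h
    rcases x.2.2 with hbig | hleaf
    · exfalso
      have h1 : T.Δ x.1 = 1 := by
        rw [← delta_S hbr hbig]
        exact (Tprime hbr).isLeaf_iff_delta_eq_one.mp h
      exact not_isLeaf_of_big T C hr hC hbig (T.isLeaf_iff_delta_eq_one.mpr h1)
    · exact hleaf
  · intro h
    refine Finset.eq_empty_iff_forall_notMem.mpr ?_
    intro u hu
    have := (childS_data hbr hu).1
    rw [h] at this
    simp at this

lemma regularS (hr : 4 ≤ r) (hC : 1 ≤ C) : (Tprime hbr).Regular C := by
  intro v hv
  have hbig : Big T C v.1 := by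
    rcases v.2.2 with hbig | hleaf
    · exact hbig
    · exact absurd ((isLeafS_iff hbr hr hC).mpr hleaf) hv
  have h1 : Real.exp (C ^ 2 * r ^ 2 * (4:ℝ) ^ (T.s T.root - T.s v.1)) ≤ (T.Δ v.1 : ℝ) := hbig
  have h2 : (Tprime hbr).Δ v = T.Δ v.1 := delta_S hbr hbig
  have hroot : (Tprime hbr).s (Tprime hbr).root = T.s (root' T C) := rfl
  have hsv : (Tprime hbr).s v = T.s v.1 := rfl
  rw [hroot, hsv, h2]
  refine le_trans (Real.exp_le_exp.mpr ?_) h1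
  apply mul_le_mul_of_nonneg_left ?_ (by positivity)
  apply zpow_le_zpow_right₀ (by norm_num)
  have := T.s_le_root (root' T C)
  omega

end RegTree
namespace RegTree

open SeparatedTree

variable {X : Type*} [MetricSpace X] {r : ℝ} {T : SeparatedTree X r} {C : ℝ}
variable (hbr : Big T C (root' T C))

lemma ancestor_lift {w' : ιs T C} : ∀ (a : ℕ) (ℓ' : ιs T C), a ≤ T.depth ℓ'.1 →
    T.parent^[a] ℓ'.1 = w'.1 →
    ∃ i ≤ (Tprime hbr).depth ℓ', (parentS hbr)^[i] ℓ' = w' := by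
  intro a
  induction a using Nat.strong_induction_on with
  | _ a ih =>
    intro ℓ' ha heq
    rcases Nat.eq_zero_or_pos a with rfl | hapos
    · exact ⟨0, by omega, Subtype.ext (by simpa using heq)⟩
    by_cases hroot : ℓ'.1 = root' T C
    · exfalso
      rw [hroot] at heq ha
      have := strict_anc_root'_small T C hapos ha
      rw [heq] at this
      rcases w'.2.2 with hb | hl
      · exact this.1 hb
      · exact this.2 hl
    · have hex := exBigAnc T C hbr ℓ'.2 hroot
      obtain ⟨⟨hj1, hjd⟩, hjb⟩ := jdx_spec T C hex
      rcases Nat.lt_or_ge a (jdx T C ℓ'.1) with hlt | hge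
      · exfalso
        have hnb : ¬ Big T C (T.parent^[a] ℓ'.1) := jdx_min T C hex hapos hlt
        rw [heq] at hnb
        have hl : T.IsLeaf w'.1 := w'.2.2.resolve_left hnb
        have hch : T.parent^[a-1] ℓ'.1 ∈ T.children w'.1 := by
          rw [T.mem_children_iff]
          constructor
          · obtain ⟨a', rfl⟩ : ∃ a', a = a' + 1 := ⟨a - 1, by omega⟩
            rw [Nat.add_sub_cancel, ← heq, Function.iterate_succ_apply']
          · exact T.ne_root_of_depth_pos
              (by rw [T.depth_iterate (by omega : a - 1 ≤ T.depth ℓ'.1)]; omega)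
        rw [hl] at hch
        simp at hch
      · set J := jdx T C ℓ'.1 with hJ
        have hℓne : ℓ' ≠ rootS T C := (ne_rootS_iff).mpr hroot
        have hpu : (parentS hbr ℓ').1 = T.parent^[J] ℓ'.1 := by
          rw [parentS_ne hbr hroot, pstar_def]
        have hdpu : T.depth (parentS hbr ℓ').1 = T.depth ℓ'.1 - J := by
          rw [hpu, T.depth_iterate hjd]
        have hheq : T.parent^[a - J] (parentS hbr ℓ').1 = w'.1 := by
          rw [hpu, ← Function.iterate_add_apply]
          have : a - J + J = a := by omega
          rw [this, heq]
        obtain ⟨i, hi, hieq⟩ := ih (a - J) (by omega) (parentS hbr ℓ') (by omega) hheq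
        refine ⟨i + 1, ?_, ?_⟩
        · have hdd := parent_depthS hbr hℓne
          have : (Tprime hbr).depth ℓ' = ddep T C ℓ'.1 := rfl
          have h2 : (Tprime hbr).depth (parentS hbr ℓ') = ddep T C (parentS hbr ℓ').1 := rfl
          omega
        · rw [Function.iterate_succ_apply]
          exact hieq

lemma big_pv {ℓ' : ιs T C} {k : ℕ} (hk : k < (Tprime hbr).depth ℓ') :
    Big T C (((Tprime hbr).pathVertex ℓ' k).1) := by
  have h1 : (Tprime hbr).pathVertex ℓ' k
      = (Tprime hbr).parent ((Tprime hbr).pathVertex ℓ' (k+1)) :=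
    ((Tprime hbr).parent_pathVertex (by omega)).symm
  set w1 := (Tprime hbr).pathVertex ℓ' (k+1) with hw1
  have hdw1 : (Tprime hbr).depth w1 = k + 1 := (Tprime hbr).depth_pathVertex (by omega)
  have hne : w1 ≠ (Tprime hbr).root := (Tprime hbr).ne_root_of_depth_pos (by omega)
  have hne' : w1.1 ≠ root' T C := (ne_rootS_iff).mp hne
  have hex := exBigAnc T C hbr w1.2 hne'
  rw [h1]
  have h2 : ((Tprime hbr).parent w1).1 = T.parent^[jdx T C w1.1] w1.1 := by
    have : (Tprime hbr).parent w1 = parentS hbr w1 := rfl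
    rw [this, parentS_ne hbr hne', pstar_def]
  rw [h2]
  exact (jdx_spec T C hex).2

lemma leafSum_bounds (hr : 4 ≤ r) (hC : 1 ≤ C) {ℓ' : ιs T C}
    (hlf : (Tprime hbr).IsLeaf ℓ') :
    (Tprime hbr).leafSum ℓ' ≤ T.leafSum ℓ'.1 ∧
    T.leafSum ℓ'.1 ≤ (Tprime hbr).leafSum ℓ' + (4/3) * (C * r ^ (T.s T.root + 1)) := by
  classical
  have hr0 : (0:ℝ) < r := by linarith
  have hTleaf : T.IsLeaf ℓ'.1 := (isLeafS_iff hbr hr hC).mp hlf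
  set d' := (Tprime hbr).depth ℓ' with hd'
  set dd := T.depth ℓ'.1 with hdd
  set ψ : ℕ → ℕ := fun k => T.depth (((Tprime hbr).pathVertex ℓ' k).1) with hψ
  have hcorr : ∀ k, ψ k ≤ dd ∧ T.pathVertex ℓ'.1 (ψ k) = ((Tprime hbr).pathVertex ℓ' k).1 := by
    intro k
    obtain ⟨b, hb, heq⟩ := underlying_iterate hbr ((Tprime hbr).depth ℓ' - k) ℓ'
    have heq' : ((Tprime hbr).pathVertex ℓ' k).1 = T.parent^[b] ℓ'.1 := heq
    have hψk : ψ k = dd - b := by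
      rw [hψ]
      simp only
      rw [heq', T.depth_iterate hb, hdd]
    constructor
    · omega
    · rw [heq', hψk]
      unfold SeparatedTree.pathVertex
      congr 1
      omega
  have hterm : ∀ k ∈ Finset.range (d' + 1),
      (Tprime hbr).pterm ℓ' k = T.pterm ℓ'.1 (ψ k) := by
    intro k hk
    rw [Finset.mem_range] at hk
    have hΔ : (Tprime hbr).Δ ((Tprime hbr).pathVertex ℓ' k)
        = T.Δ (((Tprime hbr).pathVertex ℓ' k).1) := by
      rcases Nat.lt_or_ge k d' with hlt | hge
      · exact delta_S hbr (big_pv hbr hlt)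
      · have hkd : k = d' := by omega
        have hpv : (Tprime hbr).pathVertex ℓ' k = ℓ' := by
          rw [hkd, hd']
          exact (Tprime hbr).pathVertex_self ℓ'
        rw [hpv]
        replace hlf := (Tprime hbr).isLeaf_iff_delta_eq_one.mp hlf
        rw [T.isLeaf_iff_delta_eq_one] at hTleaf
        rw [hlf, hTleaf]
    unfold SeparatedTree.pterm
    rw [(hcorr k).2]
    have hs : (Tprime hbr).s ((Tprime hbr).pathVertex ℓ' k)
        = T.s (((Tprime hbr).pathVertex ℓ' k).1) := rfl
    rw [hs, hΔ]
  have hinj : ∀ k1 ∈ Finset.range (d' + 1), ∀ k2 ∈ Finset.range (d' + 1),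
      ψ k1 = ψ k2 → k1 = k2 := by
    intro k1 hk1 k2 hk2 he
    rw [Finset.mem_range] at hk1 hk2
    have h1 := (hcorr k1).2
    have h2 := (hcorr k2).2
    rw [he] at h1
    have hv : (Tprime hbr).pathVertex ℓ' k1 = (Tprime hbr).pathVertex ℓ' k2 :=
      Subtype.ext (h1.symm.trans h2)
    have d1 := (Tprime hbr).depth_pathVertex (ℓ := ℓ') (k := k1) (by omega)
    have d2 := (Tprime hbr).depth_pathVertex (ℓ := ℓ') (k := k2) (by omega)
    rw [hv] at d1
    omega
  have himg : (Finset.range (d' + 1)).image ψ ⊆ Finset.range (dd + 1) := by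
    intro j hj
    rw [Finset.mem_image] at hj
    obtain ⟨k, -, rfl⟩ := hj
    rw [Finset.mem_range]
    have := (hcorr k).1
    omega
  have hsum' : (Tprime hbr).leafSum ℓ'
      = ∑ j ∈ (Finset.range (d' + 1)).image ψ, T.pterm ℓ'.1 j := by
    rw [Finset.sum_image hinj]
    unfold SeparatedTree.leafSum
    exact Finset.sum_congr rfl hterm
  have hL1 : (Tprime hbr).leafSum ℓ' ≤ T.leafSum ℓ'.1 := by
    rw [hsum']
    unfold SeparatedTree.leafSum
    exact Finset.sum_le_sum_of_subset_of_nonneg himg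
      (fun j _ _ => T.pterm_nonneg hr0 ℓ'.1 j)
  refine ⟨hL1, ?_⟩
  have hsplit := Finset.sum_sdiff (f := T.pterm ℓ'.1) himg
  have hbad : ∀ j ∈ Finset.range (dd + 1) \ (Finset.range (d' + 1)).image ψ,
      ¬ Big T C (T.pathVertex ℓ'.1 j) := by
    intro j hj
    rw [Finset.mem_sdiff, Finset.mem_range] at hj
    obtain ⟨hjd, hjni⟩ := hj
    intro hbig
    apply hjni
    have hwmem : TMem T C (T.pathVertex ℓ'.1 j) := by
      refine ⟨?_, Or.inl hbig⟩
      exact reach_iterate T C ℓ'.2.1 (dd - j) (by omega)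
    obtain ⟨i, hi, hieq⟩ := ancestor_lift hbr (w' := ⟨T.pathVertex ℓ'.1 j, hwmem⟩)
      (dd - j) ℓ' (by omega) rfl
    rw [Finset.mem_image]
    refine ⟨d' - i, by rw [Finset.mem_range]; omega, ?_⟩
    have hpv : (Tprime hbr).pathVertex ℓ' (d' - i) = ⟨T.pathVertex ℓ'.1 j, hwmem⟩ := by
      unfold SeparatedTree.pathVertex
      have harith : (Tprime hbr).depth ℓ' - (d' - i) = i := by omega
      rw [show ((Tprime hbr).depth ℓ' - (d' - i)) = i from harith]
      exact hieq
    rw [hψ]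
    simp only
    rw [hpv]
    exact T.depth_pathVertex (by omega)
  have hsmall := sum_small T C hr hC (ℓ := ℓ'.1)
    (A := Finset.range (dd + 1) \ (Finset.range (d' + 1)).image ψ)
    (Finset.sdiff_subset) hbad
  have hTsum : T.leafSum ℓ'.1 = ∑ j ∈ Finset.range (dd + 1), T.pterm ℓ'.1 j := rfl
  rw [hTsum, ← hsplit, hsum']
  linarith

end RegTree
namespace RegTree

open SeparatedTree

variable {X : Type*} [MetricSpace X] {r : ℝ} {T : SeparatedTree X r} {C : ℝ}
variable (hbr : Big T C (root' T C))

lemma val_lower (hr : 4 ≤ r) (hC : 1 ≤ C)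
    (hval : 4 * C * r ^ (T.s T.root + 1) ≤ T.val) :
    (1/2) * T.val ≤ (Tprime hbr).val := by
  apply (Tprime hbr).le_val
  intro ℓ' hlf
  have hTleaf := (isLeafS_iff hbr hr hC).mp hlf
  have h1 : T.val ≤ T.leafSum ℓ'.1 := T.val_le_leafSum hTleaf
  have h2 := (leafSum_bounds hbr hr hC hlf).2
  have hr0 : (0:ℝ) < r := by linarith
  have hC0 : (0:ℝ) < C := by linarith
  have hpos : (0:ℝ) < C * r ^ (T.s T.root + 1) := by positivity
  linarith

lemma exists_min_leaf (T : SeparatedTree X r) (C : ℝ) :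
    ∃ ℓ : T.ι, T.IsLeaf ℓ ∧ Reach T C ℓ ∧ T.leafSum ℓ = T.val := by
  classical
  have hex : ∃ j, T.IsLeaf ((mnext T)^[j] T.root) :=
    reach_leaf T (mnext T) (fun v h => mnext_mem T h) T.root
  set n := Nat.find hex with hn
  have hleaf : T.IsLeaf ((mnext T)^[n] T.root) := Nat.find_spec hex
  have hmin : ∀ i < n, ¬ T.IsLeaf ((mnext T)^[i] T.root) := fun i hi => Nat.find_min hex hi
  have hreach : Reach T C ((mnext T)^[n] T.root) := reach_mchain T C (reach_root T C) n hmin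
  have hF : ∀ j ≤ n, Fval T ((mnext T)^[j] T.root) = Fval T T.root := by
    intro j hj
    induction j with
    | zero => simp
    | succ m ih =>
      rw [Function.iterate_succ_apply', Fval_mnext T (hmin m (by omega))]
      exact ih (by omega)
  refine ⟨(mnext T)^[n] T.root, hleaf, hreach, ?_⟩
  rw [← Fval_leaf T hleaf, hF n (le_refl _), Fval_root]

lemma val_upper (hr : 4 ≤ r) (hC : 1 ≤ C) : (Tprime hbr).val ≤ T.val := by
  obtain ⟨ℓ, hleaf, hreach, hsum⟩ := exists_min_leaf T C
  set ℓ' : ιs T C := ⟨ℓ, hreach, Or.inr hleaf⟩ with hℓ'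
  have hlf : (Tprime hbr).IsLeaf ℓ' := by
    rw [isLeafS_iff hbr hr hC]
    exact hleaf
  have h1 := (Tprime hbr).val_le_leafSum hlf
  have h2 := (leafSum_bounds hbr hr hC hlf).1
  have h3 : ℓ'.1 = ℓ := rfl
  rw [h3] at h2
  linarith

end RegTree
/-- If `r ≥ 4`, `C ≥ 1`, and `(T,s)` is an `r`-separated tree in `X` with
`val_r(T,s) ≥ 4C·r^{s(root)+1}`, then there is a `C`-regular `r`-separated tree `(T',s')`
in `X` with `(1/2)·val_r(T,s) ≤ val_r(T',s') ≤ val_r(T,s)`. -/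
theorem exists_regular_separated_tree (r C : ℝ) (hr : 4 ≤ r) (hC : 1 ≤ C)
    (T : SeparatedTree X r)
    (hval : 4 * C * r ^ (T.s T.root + 1) ≤ T.val) :
    ∃ T' : SeparatedTree X r, T'.Regular C ∧
      (1 / 2) * T.val ≤ T'.val ∧ T'.val ≤ T.val := by
  have hbr := RegTree.big_root' T C hr hC hval
  exact ⟨RegTree.Tprime hbr, RegTree.regularS hbr hr hC,
    RegTree.val_lower hbr hr hC hval, RegTree.val_upper hbr hr hC⟩
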